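/- Dyadic maximal inequality for Hilbert-valued partial sums: let (Z_i)_{i≥1} be Bochner-integrable random elements of H with 𝔼[Z_i] = 0 and 𝔼‖Z_i‖² < ∞, and suppose there is a constant K < ∞ such that 𝔼‖∑_{i=m+1}^{m+ℓ} Z_i‖² ≤ K·ℓ for all integers m ≥ 0 and ℓ ≥ 1. Then for every integer r ≥ 1, every m ≥ 0 and every ε > 0, writing U_ℓ := ∑_{i=m+1}^{m+ℓ} Z_i, one has ℙ( max_{1≤ℓ≤2^r} ‖U_ℓ‖ > ε·2^r ) ≤ 4K(r+1)³/(ε²·2^r). -/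

import Mathlib

open MeasureTheory

noncomputable section

namespace DyadicAux

variable {H : Type*} [NormedAddCommGroup H]

/-- Maximum of block sums at dyadic scale `j` inside `[0, 2^r]`. -/
def bmax (v : ℕ → H) (r j : ℕ) : ℝ :=
  (Finset.range (2 ^ (r - j))).sup'
    (Finset.nonempty_range_iff.mpr (pow_pos two_pos _).ne')
    fun k => ‖∑ i ∈ Finset.Ioc (k * 2 ^ j) ((k + 1) * 2 ^ j), v i‖

lemma le_bmax (v : ℕ → H) (r j k : ℕ) (hk : k < 2 ^ (r - j)) :
    ‖∑ i ∈ Finset.Ioc (k * 2 ^ j) ((k + 1) * 2 ^ j), v i‖ ≤ bmax v r j := by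
  unfold bmax
  exact Finset.le_sup' (fun k => ‖∑ i ∈ Finset.Ioc (k * 2 ^ j) ((k + 1) * 2 ^ j), v i‖)
    (Finset.mem_range.mpr hk)

lemma bmax_nonneg (v : ℕ → H) (r j : ℕ) : 0 ≤ bmax v r j :=
  le_trans (norm_nonneg _) (le_bmax v r j 0 (pow_pos two_pos _))

lemma dyadic_rec (v : ℕ → H) (r : ℕ) :
    ∀ j a ℓ : ℕ, 2 ^ j ∣ a → ℓ < 2 ^ j → a + ℓ ≤ 2 ^ r →
      ‖∑ i ∈ Finset.Ioc a (a + ℓ), v i‖ ≤ ∑ j' ∈ Finset.range j, bmax v r j' := by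
  intro j
  induction j with
  | zero =>
    intro a ℓ _ hℓ _
    interval_cases ℓ
    simp
  | succ j ih =>
    intro a ℓ hdvd hℓ hle
    have hdvd' : 2 ^ j ∣ a := (pow_dvd_pow 2 (Nat.le_succ j)).trans hdvd
    rcases lt_or_ge ℓ (2 ^ j) with h | h
    · calc ‖∑ i ∈ Finset.Ioc a (a + ℓ), v i‖
          ≤ ∑ j' ∈ Finset.range j, bmax v r j' := ih a ℓ hdvd' h hle
        _ ≤ ∑ j' ∈ Finset.range (j + 1), bmax v r j' := by
            rw [Finset.sum_range_succ]; linarith [bmax_nonneg v r j]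
    · have hsplit : (∑ i ∈ Finset.Ioc a (a + 2 ^ j), v i)
          + ∑ i ∈ Finset.Ioc (a + 2 ^ j) (a + ℓ), v i
          = ∑ i ∈ Finset.Ioc a (a + ℓ), v i :=
        Finset.sum_Ioc_consecutive v (Nat.le_add_right _ _) (Nat.add_le_add_left h a)
    -- bound on the scale
      have h2jr : (2 : ℕ) ^ j ≤ 2 ^ r := le_trans h (le_trans (Nat.le_add_left _ _) hle)
      have hjr : j ≤ r := (Nat.pow_le_pow_iff_right (by norm_num)).mp h2jr
      obtain ⟨k, hk⟩ := hdvd'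
      have hblock1 : a = k * 2 ^ j := by rw [hk]; ring
      have hblock2 : a + 2 ^ j = (k + 1) * 2 ^ j := by rw [hblock1]; ring
      have hklt : k < 2 ^ (r - j) := by
        have hle2 : (k + 1) * 2 ^ j ≤ 2 ^ (r - j) * 2 ^ j := by
          rw [← hblock2, ← pow_add, Nat.sub_add_cancel hjr]
          exact le_trans (Nat.add_le_add_left h a) hle
        have := Nat.le_of_mul_le_mul_right hle2 (pow_pos two_pos j)
        omega
      have hfirst : ‖∑ i ∈ Finset.Ioc a (a + 2 ^ j), v i‖ ≤ bmax v r j := by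
        rw [hblock2, hblock1]; exact le_bmax v r j k hklt
      have hsecond : ‖∑ i ∈ Finset.Ioc (a + 2 ^ j) (a + ℓ), v i‖
          ≤ ∑ j' ∈ Finset.range j, bmax v r j' := by
        have h1 : a + ℓ = (a + 2 ^ j) + (ℓ - 2 ^ j) := by omega
        have h2 : ℓ - 2 ^ j < 2 ^ j := by
          have : ℓ < 2 ^ (j + 1) := hℓ
          rw [pow_succ] at this; omega
        rw [h1]
        exact ih (a + 2 ^ j) (ℓ - 2 ^ j) (dvd_add ⟨k, hk⟩ dvd_rfl) h2 (by omega)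
      calc ‖∑ i ∈ Finset.Ioc a (a + ℓ), v i‖
          = ‖(∑ i ∈ Finset.Ioc a (a + 2 ^ j), v i)
              + ∑ i ∈ Finset.Ioc (a + 2 ^ j) (a + ℓ), v i‖ := by rw [hsplit]
        _ ≤ ‖∑ i ∈ Finset.Ioc a (a + 2 ^ j), v i‖
              + ‖∑ i ∈ Finset.Ioc (a + 2 ^ j) (a + ℓ), v i‖ := norm_add_le _ _
        _ ≤ bmax v r j + ∑ j' ∈ Finset.range j, bmax v r j' :=
            add_le_add hfirst hsecond
        _ = ∑ j' ∈ Finset.range (j + 1), bmax v r j' := by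
            rw [Finset.sum_range_succ]; ring

lemma dyadic_main (v : ℕ → H) (r ℓ : ℕ) (h1 : 1 ≤ ℓ) (h2 : ℓ ≤ 2 ^ r) :
    ‖∑ i ∈ Finset.Ioc 0 ℓ, v i‖ ≤ ∑ j ∈ Finset.range (r + 1), bmax v r j := by
  rcases eq_or_lt_of_le h2 with he | hl
  · have h0 : (0 : ℕ) < 2 ^ (r - r) := pow_pos two_pos _
    have hb := le_bmax v r r 0 h0
    norm_num at hb
    rw [he]
    exact le_trans hb
      (Finset.single_le_sum (fun j _ => bmax_nonneg v r j) (Finset.self_mem_range_succ r))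
  · have h := dyadic_rec v r r 0 ℓ (dvd_zero _) hl (by omega)
    simp only [Nat.zero_add] at h
    refine le_trans h ?_
    rw [Finset.sum_range_succ]
    linarith [bmax_nonneg v r r]

end DyadicAux

open DyadicAux

/-- Dyadic maximal inequality for Hilbert-valued partial sums: if the
centered, square-integrable `H`-valued random elements `Z_i` satisfy the uniform block
second-moment bound `𝔼‖∑_{i=m+1}^{m+ℓ} Z_i‖² ≤ K·ℓ`, then for every `r ≥ 1`, `m ≥ 0`,
`ε > 0`, with `U_ℓ = ∑_{i=m+1}^{m+ℓ} Z_i`,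
`ℙ(max_{1≤ℓ≤2^r} ‖U_ℓ‖ > ε·2^r) ≤ 4K(r+1)³/(ε²·2^r)`. -/
theorem dyadic_maximal_inequality
    {H : Type*} [NormedAddCommGroup H] [InnerProductSpace ℝ H] [CompleteSpace H]
    [MeasurableSpace H] [BorelSpace H] [TopologicalSpace.SeparableSpace H]
    {Ω : Type*} [MeasurableSpace Ω] (P : Measure Ω) [IsProbabilityMeasure P]
    (Z : ℕ → Ω → H)
    (hZmeas : ∀ i, 1 ≤ i → AEStronglyMeasurable (Z i) P)
    (hZint : ∀ i, 1 ≤ i → Integrable (Z i) P)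
    (hZmean : ∀ i, 1 ≤ i → ∫ ω, Z i ω ∂P = 0)
    (hZ2 : ∀ i, 1 ≤ i → Integrable (fun ω => ‖Z i ω‖ ^ 2) P)
    (K : ℝ)
    (hK : ∀ m ℓ : ℕ, 1 ≤ ℓ →
      ∫ ω, ‖∑ i ∈ Finset.Icc (m + 1) (m + ℓ), Z i ω‖ ^ 2 ∂P ≤ K * ℓ)
    (r : ℕ) (hr : 1 ≤ r) (m : ℕ) (ε : ℝ) (hε : 0 < ε) :
    (P {ω | ε * 2 ^ r <
        (Finset.Icc 1 (2 ^ r)).sup'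
          (Finset.nonempty_Icc.mpr (Nat.one_le_pow r 2 (by norm_num)))
          (fun ℓ => ‖∑ i ∈ Finset.Icc (m + 1) (m + ℓ), Z i ω‖)}).toReal
      ≤ 4 * K * ((r : ℝ) + 1) ^ 3 / (ε ^ 2 * 2 ^ r) := by
  -- notation
  have hr1pos : (0 : ℝ) < (r : ℝ) + 1 := by positivity
  set c : ℝ := ε * 2 ^ r / ((r : ℝ) + 1) with hc
  have hcpos : 0 < c := by rw [hc]; positivity
  -- K is nonnegative
  have hK0 : 0 ≤ K := by
    have h1 := hK 0 1 le_rfl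
    have h2 : (0 : ℝ) ≤ ∫ ω, ‖∑ i ∈ Finset.Icc (0 + 1) (0 + 1), Z i ω‖ ^ 2 ∂P :=
      integral_nonneg fun ω => by positivity
    simpa using le_trans h2 h1
  -- the blocks
  set B : ℕ → ℕ → Ω → H :=
    fun j k ω => ∑ i ∈ Finset.Ioc (m + k * 2 ^ j) (m + (k + 1) * 2 ^ j), Z i ω with hB
  -- re-indexing lemma
  have hmap : ∀ (ω : Ω) (a b : ℕ),
      ∑ i ∈ Finset.Ioc a b, Z (m + i) ω = ∑ i ∈ Finset.Ioc (m + a) (m + b), Z i ω := by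
    intro ω a b
    rw [← Finset.map_add_left_Ioc, Finset.sum_map]
    rfl
  -- event inclusion
  have hsub : {ω | ε * 2 ^ r <
        (Finset.Icc 1 (2 ^ r)).sup'
          (Finset.nonempty_Icc.mpr (Nat.one_le_pow r 2 (by norm_num)))
          (fun ℓ => ‖∑ i ∈ Finset.Icc (m + 1) (m + ℓ), Z i ω‖)}
      ⊆ ⋃ j ∈ Finset.range (r + 1), ⋃ k ∈ Finset.range (2 ^ (r - j)),
          {ω | c < ‖B j k ω‖} := by
    intro ω hω
    simp only [Set.mem_setOf_eq, Finset.lt_sup'_iff] at hω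
    obtain ⟨ℓ, hℓmem, hℓ⟩ := hω
    rw [Finset.mem_Icc] at hℓmem
    by_contra hcon
    simp only [Set.mem_iUnion, Set.mem_setOf_eq, not_exists, not_lt] at hcon
    have hble : ∀ j ∈ Finset.range (r + 1), bmax (fun i => Z (m + i) ω) r j ≤ c := by
      intro j hj
      apply Finset.sup'_le
      intro k hk
      have h1 := hcon j hj k hk
      have h2 : ∑ i ∈ Finset.Ioc (k * 2 ^ j) ((k + 1) * 2 ^ j), Z (m + i) ω = B j k ω := by
        rw [hmap]
      rw [h2]
      exact h1
    have heq : ∑ i ∈ Finset.Icc (m + 1) (m + ℓ), Z i ω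
        = ∑ i ∈ Finset.Ioc 0 ℓ, Z (m + i) ω := by
      rw [Finset.Icc_add_one_left_eq_Ioc, hmap ω 0 ℓ, Nat.add_zero]
    have hmain := dyadic_main (fun i => Z (m + i) ω) r ℓ hℓmem.1 hℓmem.2
    have hsum : ∑ j ∈ Finset.range (r + 1), bmax (fun i => Z (m + i) ω) r j
        ≤ ((r : ℝ) + 1) * c := by
      calc ∑ j ∈ Finset.range (r + 1), bmax (fun i => Z (m + i) ω) r j
          ≤ ∑ _j ∈ Finset.range (r + 1), c := Finset.sum_le_sum hble
        _ = ((r : ℝ) + 1) * c := by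
            rw [Finset.sum_const, Finset.card_range, nsmul_eq_mul]; push_cast; ring
    have hfin : ((r : ℝ) + 1) * c = ε * 2 ^ r := by
      rw [hc, mul_div_cancel₀]
      exact hr1pos.ne'
    rw [heq] at hℓ
    linarith [le_trans hmain hsum, hℓ, hfin.le]
  -- integrability of squared block norms
  have hint_sq : ∀ s : Finset ℕ, (∀ i ∈ s, 1 ≤ i) →
      Integrable (fun ω => ‖∑ i ∈ s, Z i ω‖ ^ 2) P := by
    intro s hs
    have hmeas : AEStronglyMeasurable (fun ω => ∑ i ∈ s, Z i ω) P :=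
      Finset.aestronglyMeasurable_fun_sum s fun i hi => hZmeas i (hs i hi)
    have hg : Integrable (fun ω => (s.card : ℝ) * ∑ i ∈ s, ‖Z i ω‖ ^ 2) P :=
      (integrable_finset_sum s fun i hi => hZ2 i (hs i hi)).const_mul _
    refine hg.mono' (hmeas.norm.pow 2) ?_
    filter_upwards with ω
    have h1 : ‖∑ i ∈ s, Z i ω‖ ^ 2 ≤ (∑ i ∈ s, ‖Z i ω‖) ^ 2 :=
      pow_le_pow_left₀ (norm_nonneg _) (norm_sum_le _ _) 2
    have h2 : (∑ i ∈ s, ‖Z i ω‖) ^ 2 ≤ (s.card : ℝ) * ∑ i ∈ s, ‖Z i ω‖ ^ 2 :=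
      sq_sum_le_card_mul_sum_sq
    rw [Real.norm_of_nonneg (by positivity)]
    linarith
  -- per-block Chebyshev bound
  have hterm : ∀ j, j ∈ Finset.range (r + 1) → ∀ k : ℕ,
      (P {ω | c < ‖B j k ω‖}).toReal ≤ K * 2 ^ j / c ^ 2 := by
    intro j _ k
    have hsI : ∀ i ∈ Finset.Ioc (m + k * 2 ^ j) (m + (k + 1) * 2 ^ j), 1 ≤ i := by
      intro i hi
      have := (Finset.mem_Ioc.mp hi).1
      omega
    have hBint : Integrable (fun ω => ‖B j k ω‖ ^ 2) P := hint_sq _ hsI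
    have hBmom : ∫ ω, ‖B j k ω‖ ^ 2 ∂P ≤ K * 2 ^ j := by
      have h := hK (m + k * 2 ^ j) (2 ^ j) (Nat.one_le_two_pow)
      have hseteq : Finset.Icc (m + k * 2 ^ j + 1) (m + k * 2 ^ j + 2 ^ j)
          = Finset.Ioc (m + k * 2 ^ j) (m + (k + 1) * 2 ^ j) := by
        rw [Finset.Icc_add_one_left_eq_Ioc]
        congr 1
        ring
      rw [hseteq] at h
      have : ((2 ^ j : ℕ) : ℝ) = (2 : ℝ) ^ j := by push_cast; ring
      rw [this] at h
      exact h
    have hcheb := mul_meas_ge_le_integral_of_nonneg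
      (ae_of_all P fun ω => sq_nonneg ‖B j k ω‖) hBint (c ^ 2)
    have hss : {ω | c < ‖B j k ω‖} ⊆ {ω | c ^ 2 ≤ ‖B j k ω‖ ^ 2} := by
      intro ω hω
      exact pow_le_pow_left₀ hcpos.le (le_of_lt hω) 2
    have hmono : (P {ω | c < ‖B j k ω‖}).toReal
        ≤ (P {ω | c ^ 2 ≤ ‖B j k ω‖ ^ 2}).toReal :=
      ENNReal.toReal_mono (measure_ne_top P _) (measure_mono hss)
    rw [le_div_iff₀ (by positivity)]
    calc (P {ω | c < ‖B j k ω‖}).toReal * c ^ 2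
        ≤ (P {ω | c ^ 2 ≤ ‖B j k ω‖ ^ 2}).toReal * c ^ 2 := by nlinarith [sq_nonneg c]
      _ = c ^ 2 * (P {ω | c ^ 2 ≤ ‖B j k ω‖ ^ 2}).toReal := by ring
      _ ≤ ∫ ω, ‖B j k ω‖ ^ 2 ∂P := hcheb
      _ ≤ K * 2 ^ j := hBmom
  -- measure of the event
  have hmeasle : P {ω | ε * 2 ^ r <
        (Finset.Icc 1 (2 ^ r)).sup'
          (Finset.nonempty_Icc.mpr (Nat.one_le_pow r 2 (by norm_num)))
          (fun ℓ => ‖∑ i ∈ Finset.Icc (m + 1) (m + ℓ), Z i ω‖)}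
      ≤ ∑ j ∈ Finset.range (r + 1), ∑ k ∈ Finset.range (2 ^ (r - j)),
          P {ω | c < ‖B j k ω‖} := by
    refine le_trans (measure_mono hsub) ?_
    refine le_trans (measure_biUnion_finset_le _ _) ?_
    exact Finset.sum_le_sum fun j _ => measure_biUnion_finset_le _ _
  have hne : ∀ j ∈ Finset.range (r + 1),
      (∑ k ∈ Finset.range (2 ^ (r - j)), P {ω | c < ‖B j k ω‖}) < ⊤ := by
    intro j _
    refine lt_of_le_of_lt (Finset.sum_le_sum fun k _ => measure_mono (Set.subset_univ _)) ?_
    simp only [measure_univ, Finset.sum_const, Finset.card_range, nsmul_eq_mul, mul_one]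
    exact ENNReal.natCast_lt_top _
  have htoReal : (P {ω | ε * 2 ^ r <
        (Finset.Icc 1 (2 ^ r)).sup'
          (Finset.nonempty_Icc.mpr (Nat.one_le_pow r 2 (by norm_num)))
          (fun ℓ => ‖∑ i ∈ Finset.Icc (m + 1) (m + ℓ), Z i ω‖)}).toReal
      ≤ ∑ j ∈ Finset.range (r + 1), ∑ k ∈ Finset.range (2 ^ (r - j)),
          (P {ω | c < ‖B j k ω‖}).toReal := by
    refine le_trans (ENNReal.toReal_mono ?_ hmeasle) ?_
    · exact (ENNReal.sum_lt_top.mpr hne).ne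
    · rw [ENNReal.toReal_sum fun j hj => (hne j hj).ne]
      refine Finset.sum_le_sum fun j _ => ?_
      rw [ENNReal.toReal_sum fun k _ => measure_ne_top P _]
  refine le_trans htoReal ?_
  -- arithmetic
  have hstep1 : ∀ j ∈ Finset.range (r + 1),
      ∑ k ∈ Finset.range (2 ^ (r - j)), (P {ω | c < ‖B j k ω‖}).toReal
        ≤ K * 2 ^ r / c ^ 2 := by
    intro j hj
    have hjr : j ≤ r := by
      have := Finset.mem_range.mp hj; omega
    calc ∑ k ∈ Finset.range (2 ^ (r - j)), (P {ω | c < ‖B j k ω‖}).toReal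
        ≤ ∑ _k ∈ Finset.range (2 ^ (r - j)), (K * 2 ^ j / c ^ 2) :=
          Finset.sum_le_sum fun k _ => hterm j hj k
      _ = ((2 ^ (r - j) : ℕ) : ℝ) * (K * 2 ^ j / c ^ 2) := by
          rw [Finset.sum_const, Finset.card_range, nsmul_eq_mul]
      _ = K * ((2 : ℝ) ^ (r - j) * 2 ^ j) / c ^ 2 := by push_cast; ring
      _ = K * 2 ^ r / c ^ 2 := by
          rw [← pow_add]
          have hrj : r - j + j = r := by omega
          rw [hrj]
  have hstep2 : ∑ j ∈ Finset.range (r + 1), ∑ k ∈ Finset.range (2 ^ (r - j)),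
      (P {ω | c < ‖B j k ω‖}).toReal ≤ ((r : ℝ) + 1) * (K * 2 ^ r / c ^ 2) := by
    calc ∑ j ∈ Finset.range (r + 1), ∑ k ∈ Finset.range (2 ^ (r - j)),
          (P {ω | c < ‖B j k ω‖}).toReal
        ≤ ∑ _j ∈ Finset.range (r + 1), (K * 2 ^ r / c ^ 2) :=
          Finset.sum_le_sum hstep1
      _ = ((r : ℝ) + 1) * (K * 2 ^ r / c ^ 2) := by
          rw [Finset.sum_const, Finset.card_range, nsmul_eq_mul]; push_cast; ring
  refine le_trans hstep2 ?_
  have hkey : ((r : ℝ) + 1) * (K * 2 ^ r / c ^ 2) = K * ((r : ℝ) + 1) ^ 3 / (ε ^ 2 * 2 ^ r) := by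
    rw [hc]
    have h2r : (0 : ℝ) < (2 : ℝ) ^ r := by positivity
    field_simp
  rw [hkey]
  have h2r : (0 : ℝ) < (2 : ℝ) ^ r := by positivity
  rw [div_le_div_iff₀ (by positivity) (by positivity)]
  nlinarith [pow_pos hr1pos 3, sq_nonneg ε, mul_pos (mul_pos (pow_pos hε 2) h2r) (pow_pos hr1pos 3)]

end
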